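/- Let 2 ≤ ℓ < k, 0 < α < 1/(12k²), m := ⌊1/(4αk)⌋, and b := m(k-ℓ)+ℓ. Let C be a Hamilton ℓ-cycle on n vertices and let A be a set of at most αn vertices. Then C contains at least n/(2b) pairwise vertex-disjoint sub-ℓ-paths of length m, none of which contains a vertex of A. -/

import Mathlib

/-- The edges of an `ℓ`-path `k`-graph of length `m` with vertex sequence `v`. -/
def pathEdges {α : Type*} [DecidableEq α] (k ℓ m : ℕ) (v : ℕ → α) :
    Finset (Finset α) :=
  (Finset.range m).image (fun r => (Finset.range k).image (fun i => v (r * (k - ℓ) + i)))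

/-- `(V, E)` is an `ℓ`-path `k`-graph of length `m`. -/
def IsEllPath {α : Type*} [DecidableEq α] (k ℓ m : ℕ) (V : Finset α)
    (E : Finset (Finset α)) : Prop :=
  ∃ v : ℕ → α, Set.InjOn v (Finset.range (m * (k - ℓ) + ℓ)) ∧
    V = (Finset.range (m * (k - ℓ) + ℓ)).image v ∧ E = pathEdges k ℓ m v

lemma keyPoly (d l m : ℕ) (hm : 3*(d+l) ≤ m) :
    d*(m+(d+l))*(4*m*(d+l) + 2*(m*d+l)) ≤ 8*(m*d+l)*m*(d+l) := by
  obtain ⟨t, rfl⟩ := Nat.exists_eq_add_of_le hm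
  have h : 8*((3*(d+l)+t)*d+l)*(3*(d+l)+t)*(d+l) =
      d*(3*(d+l)+t+(d+l))*(4*(3*(d+l)+t)*(d+l) + 2*((3*(d+l)+t)*d+l))
      + (24*l^3 + 40*d*l^2 + 24*d*l^3 + 16*d^2*l + 48*d^2*l^2 + 24*d^3*l
        + t*(8*l^2 + 6*d*l + 20*d*l^2 + 26*d^2*l + 6*d^3) + t^2*(4*d*l + 2*d^2)) := by
    ring
  omega

lemma div3 (n q c e : ℕ) (hq : 0 < q) (hc : 0 < c) (he : 0 < e) (h : q*(c+e) ≤ c*e) :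
    n / c + n / e ≤ n / q := by
  rw [Nat.le_div_iff_mul_le hq]
  have h1 : n / c * c ≤ n := Nat.div_mul_le_self n c
  have h2 : n / e * e ≤ n := Nat.div_mul_le_self n e
  have key : ((n/c + n/e) * q) * (c*e) ≤ n * (c*e) := by
    calc ((n/c + n/e) * q) * (c*e) = (n/c*c)*(q*e) + (n/e*e)*(q*c) := by ring
    _ ≤ n*(q*e) + n*(q*c) :=
        Nat.add_le_add (Nat.mul_le_mul_right _ h1) (Nat.mul_le_mul_right _ h2)
    _ = n * (q*(c+e)) := by ring
    _ ≤ n * (c*e) := Nat.mul_le_mul_left n h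
  exact Nat.le_of_mul_le_mul_right key (Nat.mul_pos hc he)

theorem hamCycle_disjoint_subpaths (k ℓ n : ℕ) (hℓ : 2 ≤ ℓ) (hℓk : ℓ < k)
    (hdvd : (k - ℓ) ∣ n)
    (α : ℝ) (hα0 : 0 < α) (hα1 : α < 1 / (12 * (k : ℝ) ^ 2))
    (v : ℕ → Fin n) (hinj : Set.InjOn v (Finset.range n))
    (hspan : (Finset.range n).image v = Finset.univ)
    (EC : Finset (Finset (Fin n)))
    (hEC : EC = (Finset.range (n / (k - ℓ))).image
      (fun j => (Finset.range k).image (fun i => v ((j * (k - ℓ) + i) % n))))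
    (A : Finset (Fin n)) (hA : (A.card : ℝ) ≤ α * n) :
    let m : ℕ := ⌊1 / (4 * α * (k : ℝ))⌋₊
    let b : ℕ := m * (k - ℓ) + ℓ
    ∃ P : Fin (n / (2 * b)) → Finset (Fin n) × Finset (Finset (Fin n)),
      (∀ j, IsEllPath k ℓ m (P j).1 (P j).2) ∧
      (∀ j, (P j).2 ⊆ EC) ∧
      (∀ j j', j ≠ j' → Disjoint (P j).1 (P j').1) ∧
      (∀ j, Disjoint (P j).1 A) := by
  classical
  intro m b
  have hk0 : 0 < k := by omega
  have hkl : k - ℓ + ℓ = k := by omega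
  have hd0 : 0 < k - ℓ := by omega
  have hkR : (0:ℝ) < (k:ℝ) := by exact_mod_cast hk0
  have hαk : (0:ℝ) < 4 * α * k := by positivity
  -- m ≥ 3k
  have hm3k : 3 * k ≤ m := by
    apply Nat.le_floor
    rw [le_div_iff₀ hαk]
    push_cast
    have h12 : α * (12 * (k:ℝ)^2) < 1 := by
      rw [lt_div_iff₀ (by positivity)] at hα1
      linarith
    nlinarith
  have hm0 : 0 < m := by omega
  have hmk0 : 0 < 4 * m * k := by positivity
  -- |A| * 4mk ≤ n
  have hmle : (m:ℝ) ≤ 1 / (4*α*(k:ℝ)) := Nat.floor_le (by positivity)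
  have hAn : A.card ≤ n / (4*m*k) := by
    rw [Nat.le_div_iff_mul_le hmk0]
    have h1 : (A.card:ℝ) * (4*(m:ℝ)*k) ≤ (n:ℝ) := by
      have hα4 : α * (4*(m:ℝ)*k) ≤ 1 := by
        have h2 := mul_le_mul_of_nonneg_left hmle (le_of_lt hαk)
        rw [mul_one_div, div_self (ne_of_gt hαk)] at h2
        nlinarith
      calc (A.card:ℝ) * (4*(m:ℝ)*k) ≤ (α*n) * (4*(m:ℝ)*k) := by
            apply mul_le_mul_of_nonneg_right hA (by positivity)
        _ = (n:ℝ) * (α * (4*(m:ℝ)*k)) := by ring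
        _ ≤ (n:ℝ) * 1 := by
            apply mul_le_mul_of_nonneg_left hα4 (by positivity)
        _ = n := by ring
    exact_mod_cast h1
  -- the block length q and number of blocks r
  set q : ℕ := (k - ℓ) * (m + k) with hq_def
  have hq0 : 0 < q := Nat.mul_pos hd0 (by omega)
  have hb_eq : b = m * (k - ℓ) + ℓ := rfl
  have hb0 : 0 < b := by omega
  have hbq : b ≤ q := by
    have h1 : 1 * k ≤ (k-ℓ) * k := Nat.mul_le_mul_right _ hd0
    have h2 : q = (k-ℓ)*m + (k-ℓ)*k := by rw [hq_def]; ring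
    have h3 : m * (k-ℓ) = (k-ℓ)*m := Nat.mul_comm _ _
    rw [hb_eq, h3, h2]
    have : ℓ ≤ (k-ℓ)*k := by omega
    omega
  set r : ℕ := n / q with hr_def
  have hrq : r * q ≤ n := Nat.div_mul_le_self n q
  -- key counting inequality
  have hkey : n / (2*b) + n / (4*m*k) ≤ r := by
    apply div3 n q (2*b) (4*m*k) hq0 (by omega) hmk0
    have hp := keyPoly (k-ℓ) ℓ m (by omega)
    rw [hkl] at hp
    have h1 : q*(2*(m*(k-ℓ)+ℓ) + 4*m*k) = (k-ℓ)*(m+k)*(4*m*k+2*(m*(k-ℓ)+ℓ)) := by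
      rw [hq_def]; ring
    have h2 : (2*(m*(k-ℓ)+ℓ))*(4*m*k) = 8*(m*(k-ℓ)+ℓ)*m*k := by ring
    rw [hb_eq, h1, h2]
    exact hp
  -- index bound inside blocks
  have hblock : ∀ i t, i < r → t < b → i*q + t < n := by
    intro i t hir ht
    have h1 : (i+1) * q ≤ r * q := Nat.mul_le_mul_right _ hir
    have h2 : (i+1)*q = i*q + q := by ring
    linarith
  -- the blocks
  set Vb : ℕ → Finset (Fin n) :=
    fun i => (Finset.range (m * (k - ℓ) + ℓ)).image (fun t => v (i*q + t)) with hVb_def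
  have hVb_mem : ∀ i x, x ∈ Vb i ↔ ∃ t < b, v (i*q + t) = x := by
    intro i x
    simp [hVb_def, ← hb_eq, Finset.mem_image, Finset.mem_range]
  -- blocks are pairwise disjoint
  have hdisj : ∀ i i', i < r → i' < r → i ≠ i' → Disjoint (Vb i) (Vb i') := by
    intro i i' hir hi'r hne
    rw [Finset.disjoint_left]
    intro x hx hx'
    rw [hVb_mem] at hx hx'
    obtain ⟨t, ht, hxt⟩ := hx
    obtain ⟨t', ht', hxt'⟩ := hx'
    have hlt : i*q + t < n := hblock _ _ hir ht
    have hlt' : i'*q + t' < n := hblock _ _ hi'r ht'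
    have heq : i*q + t = i'*q + t' := by
      apply hinj (by simpa using hlt) (by simpa using hlt')
      rw [hxt, hxt']
    rcases Nat.lt_or_ge i i' with h | h
    · have h1 : (i+1) * q ≤ i' * q := Nat.mul_le_mul_right _ h
      have h2 : (i+1)*q = i*q + q := by ring
      linarith
    · have h : i' < i := by omega
      have h1 : (i'+1) * q ≤ i * q := Nat.mul_le_mul_right _ h
      have h2 : (i'+1)*q = i'*q + q := by ring
      linarith
  -- good blocks
  set S : Finset ℕ := (Finset.range r).filter (fun i => Disjoint (Vb i) A) with hS_def
  set B : Finset ℕ := (Finset.range r).filter (fun i => ¬ Disjoint (Vb i) A) with hB_def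
  have hSB : S.card + B.card = r := by
    rw [hS_def, hB_def, Finset.card_filter_add_card_filter_not, Finset.card_range]
  have hBcard : B.card ≤ A.card := by
    apply Finset.card_le_card_of_injOn
      (fun i => if h : ((Vb i) ∩ A).Nonempty then (Vb i ∩ A).min' h else v 0)
    · intro i hi
      simp only [Finset.mem_coe, hB_def, Finset.mem_filter] at hi
      have hne : ((Vb i) ∩ A).Nonempty := by
        rw [Finset.not_disjoint_iff_nonempty_inter] at hi
        exact hi.2
      simp only [dif_pos hne]
      have := Finset.min'_mem _ hne
      exact (Finset.mem_inter.mp this).2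
    · intro i hi i' hi' hfe
      by_contra hne
      simp only [Finset.mem_coe] at hi hi'
      simp only [hB_def, Finset.mem_filter, Finset.mem_range] at hi hi'
      have h1 : ((Vb i) ∩ A).Nonempty := by
        have := hi.2; rw [Finset.not_disjoint_iff_nonempty_inter] at this; exact this
      have h2 : ((Vb i') ∩ A).Nonempty := by
        have := hi'.2; rw [Finset.not_disjoint_iff_nonempty_inter] at this; exact this
      simp only [dif_pos h1, dif_pos h2] at hfe
      have hm1 : (Vb i ∩ A).min' h1 ∈ Vb i := (Finset.mem_inter.mp (Finset.min'_mem _ h1)).1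
      have hm2 : (Vb i' ∩ A).min' h2 ∈ Vb i' := (Finset.mem_inter.mp (Finset.min'_mem _ h2)).1
      rw [hfe] at hm1
      exact (Finset.disjoint_left.mp (hdisj i i' hi.1 hi'.1 hne) hm1) hm2
  have hN : n / (2*b) ≤ S.card := by
    have := hAn
    omega
  -- select the paths
  obtain ⟨T, hTS, hTcard⟩ := Finset.exists_subset_card_eq hN
  let e := T.orderIsoOfFin hTcard
  have hT_prop : ∀ x ∈ T, x < r ∧ Disjoint (Vb x) A := by
    intro x hx
    have := hTS hx
    rw [hS_def, Finset.mem_filter, Finset.mem_range] at this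
    exact this
  refine ⟨fun j => (Vb ((e j : ℕ)), pathEdges k ℓ m (fun t => v ((e j : ℕ)*q + t))),
    ?_, ?_, ?_, ?_⟩
  · -- IsEllPath
    intro j
    refine ⟨fun t => v ((e j : ℕ)*q + t), ?_, rfl, rfl⟩
    intro t ht t' ht' hvt
    simp only [Finset.coe_range, Set.mem_Iio] at ht ht'
    have hjr : (e j : ℕ) < r := (hT_prop _ (e j).2).1
    have h1 : (e j : ℕ)*q + t < n := hblock _ _ hjr (by omega)
    have h2 : (e j : ℕ)*q + t' < n := hblock _ _ hjr (by omega)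
    have := hinj (by simpa using h1) (by simpa using h2) hvt
    omega
  · -- edges ⊆ EC
    intro j E hE
    have hjr : (e j : ℕ) < r := (hT_prop _ (e j).2).1
    simp only [pathEdges, Finset.mem_image, Finset.mem_range] at hE
    obtain ⟨r', hr', rfl⟩ := hE
    rw [hEC, Finset.mem_image]
    refine ⟨(e j : ℕ)*(m+k) + r', ?_, ?_⟩
    · rw [Finset.mem_range, Nat.lt_div_iff_mul_lt' hdvd]
      have hbound : r'*(k-ℓ) + 0 < b := by
        have h3 : (r'+1)*(k-ℓ) ≤ m*(k-ℓ) := Nat.mul_le_mul_right _ (by omega)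
        have h4 : (r'+1)*(k-ℓ) = r'*(k-ℓ) + (k-ℓ) := by ring
        rw [hb_eq]
        omega
      have h5 : (k-ℓ)*((e j : ℕ)*(m+k) + r') = (e j : ℕ)*q + r'*(k-ℓ) := by
        rw [hq_def]; ring
      have := hblock ((e j : ℕ)) (r'*(k-ℓ)) hjr (by omega)
      omega
    · apply Finset.image_congr
      intro i' hi'
      rw [Finset.coe_range, Set.mem_Iio] at hi'
      have hbound : r'*(k-ℓ) + i' < b := by
        have h3 : (r'+1)*(k-ℓ) ≤ m*(k-ℓ) := Nat.mul_le_mul_right _ (by omega)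
        have h4 : (r'+1)*(k-ℓ) = r'*(k-ℓ) + (k-ℓ) := by ring
        rw [hb_eq]
        omega
      have h5 : ((e j : ℕ)*(m+k) + r')*(k-ℓ) + i' = (e j : ℕ)*q + (r'*(k-ℓ) + i') := by
        rw [hq_def]; ring
      have h6 : (e j : ℕ)*q + (r'*(k-ℓ) + i') < n := hblock _ _ hjr hbound
      dsimp only
      rw [h5, Nat.mod_eq_of_lt h6]
  · -- pairwise disjoint
    intro j j' hjj'
    have hne : (e j : ℕ) ≠ (e j' : ℕ) := by
      intro h
      apply hjj'
      have := Subtype.coe_injective h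
      exact e.injective this
    exact hdisj _ _ (hT_prop _ (e j).2).1 (hT_prop _ (e j').2).1 hne
  · -- disjoint from A
    intro j
    exact (hT_prop _ (e j).2).2
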